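/- Regard each Q_k as an element of the polynomial ring k[x_{ab} : 1 ≤ a,b ≤ n] in the entries of the generic n×n matrix X. Then for all indices 1 ≤ i, j ≤ n and all 0 ≤ k ≤ n, the identity Σ_{t=1}^n Σ_{p=1}^n (∂²Q_k/∂x_{ip}∂x_{jt})·Y_t·Y_p = 0 holds in the polynomial ring k[x_{ab}][Y_1,…,Y_n]. -/

import Mathlib

open Matrix Polynomial



section derLift
variable {K A : Type*} [CommRing K] [CommRing A] [Algebra K A] (D : Derivation K A A)

private noncomputable def derLiftFun (f : Polynomial A) : Polynomial A :=
  ⟨.ofCoeff (f.toFinsupp.coeff.mapRange D (map_zero D))⟩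

private lemma derLiftFun_coeff (f : Polynomial A) (k : ℕ) :
    (derLiftFun D f).coeff k = D (f.coeff k) := by
  rcases f with ⟨f⟩
  simp [derLiftFun, Polynomial.coeff, Finsupp.mapRange_apply]

/-- Coefficientwise lift of a derivation to the polynomial ring. -/
noncomputable def derLift : Derivation K (Polynomial A) (Polynomial A) where
  toFun := derLiftFun D
  map_add' f g := by
    apply Polynomial.ext; intro k
    rw [Polynomial.coeff_add, derLiftFun_coeff, derLiftFun_coeff, derLiftFun_coeff,
      Polynomial.coeff_add, map_add]
  map_smul' c f := by
    apply Polynomial.ext; intro k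
    rw [RingHom.id_apply, Polynomial.coeff_smul, derLiftFun_coeff, derLiftFun_coeff,
      Polynomial.coeff_smul, Derivation.map_smul]
  map_one_eq_zero' := by
    apply Polynomial.ext; intro k
    show (derLiftFun D 1).coeff k = (0 : Polynomial A).coeff k
    rw [derLiftFun_coeff, Polynomial.coeff_one, Polynomial.coeff_zero]
    split <;> simp
  leibniz' f g := by
    apply Polynomial.ext; intro k
    show (derLiftFun D (f * g)).coeff k
      = (f • derLiftFun D g + g • derLiftFun D f).coeff k
    rw [derLiftFun_coeff, Polynomial.coeff_mul, map_sum, Polynomial.coeff_add]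
    have h1 : (f • derLiftFun D g).coeff k
        = ∑ x ∈ Finset.HasAntidiagonal.antidiagonal k, f.coeff x.1 * D (g.coeff x.2) := by
      rw [smul_eq_mul, Polynomial.coeff_mul]
      exact Finset.sum_congr rfl fun x _ => by rw [derLiftFun_coeff]
    have h2 : (g • derLiftFun D f).coeff k
        = ∑ x ∈ Finset.HasAntidiagonal.antidiagonal k, g.coeff x.2 * D (f.coeff x.1) := by
      rw [smul_eq_mul, Polynomial.coeff_mul, ← Finset.Nat.sum_antidiagonal_swap]
      exact Finset.sum_congr rfl fun x _ => by simp [derLiftFun_coeff]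
    rw [h1, h2, ← Finset.sum_add_distrib]
    refine Finset.sum_congr rfl fun x _ => ?_
    rw [Derivation.leibniz, smul_eq_mul, smul_eq_mul]

lemma coeff_derLift (f : Polynomial A) (k : ℕ) : (derLift D f).coeff k = D (f.coeff k) :=
  derLiftFun_coeff D f k

@[simp] lemma derLift_C (a : A) : derLift D (Polynomial.C a) = Polynomial.C (D a) := by
  apply Polynomial.ext; intro k
  rw [coeff_derLift, Polynomial.coeff_C, Polynomial.coeff_C]
  split <;> simp

@[simp] lemma derLift_X : derLift D (Polynomial.X : Polynomial A) = 0 := by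
  apply Polynomial.ext; intro k
  rw [coeff_derLift, Polynomial.coeff_X, Polynomial.coeff_zero]
  split <;> simp

end derLift

section detDer
variable {K A : Type*} [CommRing K] [CommRing A] [Algebra K A] (D : Derivation K A A)

lemma derivation_map_prod {ι : Type*} [DecidableEq ι] (s : Finset ι) (f : ι → A) :
    D (∏ x ∈ s, f x) = ∑ x ∈ s, D (f x) * ∏ y ∈ s.erase x, f y := by
  classical
  induction s using Finset.induction_on with
  | empty => simp
  | @insert a s ha ih =>
    rw [Finset.prod_insert ha, Derivation.leibniz, smul_eq_mul, smul_eq_mul, ih,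
      Finset.sum_insert ha, Finset.erase_insert ha, Finset.mul_sum]
    rw [add_comm]
    congr 1
    · exact mul_comm _ _
    · refine Finset.sum_congr rfl fun x hx => ?_
      rw [Finset.erase_insert_of_ne (ne_of_mem_of_not_mem hx ha).symm,
        Finset.prod_insert (fun h => ha (Finset.mem_of_mem_erase h))]
      ring

lemma derivation_map_det {ι : Type*} [Fintype ι] [DecidableEq ι] (M : Matrix ι ι A) :
    D M.det = ∑ k, (M.updateRow k fun c => D (M k c)).det := by
  classical
  simp only [Matrix.det_apply]
  rw [map_sum, Finset.sum_comm]
  refine Finset.sum_congr rfl fun σ _ => ?_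
  have key : ∑ x, D (M (σ x) x) * ∏ y ∈ Finset.univ.erase x, M (σ y) y
      = ∑ k, ∏ i, (M.updateRow k fun c => D (M k c)) (σ i) i := by
    rw [← Equiv.sum_comp σ (fun k => ∏ i, (M.updateRow k fun c => D (M k c)) (σ i) i)]
    refine Finset.sum_congr rfl fun x _ => ?_
    rw [← Finset.mul_prod_erase Finset.univ _ (Finset.mem_univ x), Matrix.updateRow_self]
    congr 1
    refine Finset.prod_congr rfl fun i hi => ?_
    rw [Matrix.updateRow_ne]
    exact fun h => (Finset.ne_of_mem_erase hi) (σ.injective h)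
  simp only [Units.smul_def]
  rw [map_zsmul, derivation_map_prod, key, Finset.smul_sum]

end detDer


/-- `Q X j` is defined by `det (t•I - X) = ∑ j, (-1)^j * Q j X * t^(n-j)`. -/
noncomputable def QQ {R : Type*} [CommRing R] {n : ℕ} (X : Matrix (Fin n) (Fin n) R)
    (j : ℕ) : R :=
  (-1) ^ j * X.charpoly.coeff (n - j)

section main
open MvPolynomial

variable {K : Type*} [Field K] {n : ℕ}

/-- The derivation `∑_t Y_t ∂/∂x_{a t}` on `K[x_{bc}, Y_t]`. -/
noncomputable def Dd (K : Type*) [Field K] (n : ℕ) (a : Fin n) :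
    Derivation K (MvPolynomial (Fin n ⊕ Fin n × Fin n) K)
      (MvPolynomial (Fin n ⊕ Fin n × Fin n) K) :=
  ∑ t : Fin n, (X (Sum.inl t) : MvPolynomial (Fin n ⊕ Fin n × Fin n) K) •
    (pderiv (R := K) (Sum.inr (a, t)))

lemma Dd_apply (a : Fin n) (F : MvPolynomial (Fin n ⊕ Fin n × Fin n) K) :
    Dd K n a F = ∑ t : Fin n, X (Sum.inl t) * pderiv (Sum.inr (a, t)) F := by
  rw [Dd]
  induction (Finset.univ : Finset (Fin n)) using Finset.induction_on with
  | empty => simp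
  | @insert b s hb ih =>
    rw [Finset.sum_insert hb, Finset.sum_insert hb, Derivation.add_apply,
      Derivation.smul_apply, ih, smul_eq_mul]

lemma Dd_Y (a t : Fin n) :
    Dd K n a (X (Sum.inl t) : MvPolynomial (Fin n ⊕ Fin n × Fin n) K) = 0 := by
  rw [Dd_apply]
  refine Finset.sum_eq_zero fun p _ => ?_
  rw [pderiv_X_of_ne (by simp), mul_zero]

lemma Dd_entry (a k : Fin n) (c : Fin n) :
    Dd K n a (X (Sum.inr (k, c)) : MvPolynomial (Fin n ⊕ Fin n × Fin n) K)
      = if k = a then X (Sum.inl c) else 0 := by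
  classical
  rw [Dd_apply]
  rcases eq_or_ne k a with rfl | hka
  · rw [if_pos rfl, Finset.sum_eq_single c]
    · rw [pderiv_X_self, mul_one]
    · intro b _ hb
      rw [pderiv_X_of_ne (by simp [Ne.symm hb]), mul_zero]
    · simp
  · rw [if_neg hka]
    refine Finset.sum_eq_zero fun p _ => ?_
    rw [pderiv_X_of_ne (by simp [hka]), mul_zero]

variable (K n) in
/-- The generic matrix over `K[x_{bc}, Y_t]`. -/
noncomputable def MT : Matrix (Fin n) (Fin n) (MvPolynomial (Fin n ⊕ Fin n × Fin n) K) :=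
  Matrix.of fun a b : Fin n => X (Sum.inr (a, b))

lemma derLift_charmatrix (a k c : Fin n) :
    derLift (Dd K n a) (charmatrix (MT K n) k c)
      = - Polynomial.C (Dd K n a (MT K n k c)) := by
  rcases eq_or_ne k c with rfl | hkc
  · rw [charmatrix_apply_eq, map_sub, derLift_X, derLift_C, zero_sub]
  · rw [charmatrix_apply_ne _ _ _ hkc, map_neg, derLift_C]

lemma derLift_Dd_charpoly (a : Fin n) :
    derLift (Dd K n a) (MT K n).charpoly
      = ((charmatrix (MT K n)).updateRow a
          (fun c => - Polynomial.C (X (Sum.inl c) : MvPolynomial (Fin n ⊕ Fin n × Fin n) K))).det := by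
  rw [Matrix.charpoly, derivation_map_det, Finset.sum_eq_single a]
  · have h : (fun c => derLift (Dd K n a) (charmatrix (MT K n) a c))
        = fun c => - Polynomial.C (X (Sum.inl c) : MvPolynomial (Fin n ⊕ Fin n × Fin n) K) := by
      funext c
      rw [derLift_charmatrix, MT, Matrix.of_apply, Dd_entry, if_pos rfl]
    rw [h]
  · intro k _ hk
    refine Matrix.det_eq_zero_of_row_eq_zero k fun c => ?_
    rw [Matrix.updateRow_self, derLift_charmatrix, MT, Matrix.of_apply, Dd_entry,
      if_neg hk, map_zero, neg_zero]
  · simp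

lemma derLift_Dd_det_N1 (i j : Fin n) :
    derLift (Dd K n i) ((charmatrix (MT K n)).updateRow j
      (fun c => - Polynomial.C (X (Sum.inl c) : MvPolynomial (Fin n ⊕ Fin n × Fin n) K))).det = 0 := by
  classical
  set N₁ := (charmatrix (MT K n)).updateRow j
      (fun c => - Polynomial.C (X (Sum.inl c) : MvPolynomial (Fin n ⊕ Fin n × Fin n) K)) with hN₁
  rw [derivation_map_det]
  refine Finset.sum_eq_zero fun k _ => ?_
  rcases eq_or_ne k j with rfl | hkj
  · refine Matrix.det_eq_zero_of_row_eq_zero k fun c => ?_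
    rw [Matrix.updateRow_self, hN₁, Matrix.updateRow_self, map_neg, derLift_C, Dd_Y,
      map_zero, neg_zero]
  · rcases eq_or_ne k i with rfl | hki
    · -- row k = i ≠ j : two equal rows
      refine Matrix.det_zero_of_row_eq hkj ?_
      funext c
      rw [Matrix.updateRow_self, Matrix.updateRow_ne hkj.symm, hN₁, Matrix.updateRow_ne hkj,
        Matrix.updateRow_self, derLift_charmatrix, MT, Matrix.of_apply, Dd_entry, if_pos rfl]
    · refine Matrix.det_eq_zero_of_row_eq_zero k fun c => ?_
      rw [Matrix.updateRow_self, hN₁, Matrix.updateRow_ne hkj, derLift_charmatrix, MT,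
        Matrix.of_apply, Dd_entry, if_neg hki, map_zero, neg_zero]

lemma Dd_Dd_QQ (i j : Fin n) (m : ℕ) :
    Dd K n j (Dd K n i (QQ (MT K n) m)) = 0 := by
  have hneg : ∀ (a : Fin n) (c : MvPolynomial (Fin n ⊕ Fin n × Fin n) K),
      Dd K n a ((-1) ^ m * c) = (-1) ^ m * Dd K n a c := by
    intro a c
    rw [Derivation.leibniz, Derivation.leibniz_pow, smul_eq_mul, smul_eq_mul]
    have : Dd K n a (-1 : MvPolynomial (Fin n ⊕ Fin n × Fin n) K) = 0 := by
      rw [map_neg, Derivation.map_one_eq_zero, neg_zero]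
    rw [this]
    simp
  rw [QQ, hneg, ← coeff_derLift, derLift_Dd_charpoly, hneg, ← coeff_derLift,
    derLift_Dd_det_N1, Polynomial.coeff_zero, mul_zero]



lemma Dd_Dd_expand (i j : Fin n) (F : MvPolynomial (Fin n ⊕ Fin n × Fin n) K) :
    Dd K n j (Dd K n i F)
      = ∑ t : Fin n, ∑ p : Fin n,
          pderiv (Sum.inr (j, t)) (pderiv (Sum.inr (i, p)) F)
            * X (Sum.inl t) * X (Sum.inl p) := by
  rw [Dd_apply]
  refine Finset.sum_congr rfl fun t _ => ?_
  rw [Dd_apply, map_sum, Finset.mul_sum]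
  refine Finset.sum_congr rfl fun p _ => ?_
  rw [Derivation.leibniz, smul_eq_mul, smul_eq_mul,
    pderiv_X_of_ne (by simp), mul_zero, add_zero]
  ring

end main

theorem stmt_6 {K : Type*} [Field K] {n : ℕ} (hn : 1 ≤ n) (i j : Fin n)
    (m : ℕ) (hm : m ≤ n) :
    ∑ t : Fin n, ∑ p : Fin n,
      (MvPolynomial.C (MvPolynomial.pderiv (j, t) (MvPolynomial.pderiv (i, p)
          (QQ (Matrix.of fun a b : Fin n => MvPolynomial.X (R := K) (a, b)) m)))
        * MvPolynomial.X t * MvPolynomial.X p :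
        MvPolynomial (Fin n) (MvPolynomial (Fin n × Fin n) K)) = 0 := by
  classical
  have hQ : QQ (MT K n) m
      = MvPolynomial.rename (R := K) Sum.inr
          (QQ (Matrix.of fun a b : Fin n => MvPolynomial.X (R := K) (a, b)) m) := by
    have h1 : MT K n = (Matrix.of fun a b : Fin n => MvPolynomial.X (R := K) (a, b)).map
        ((MvPolynomial.rename (R := K)
          (Sum.inr : Fin n × Fin n → Fin n ⊕ Fin n × Fin n)).toRingHom) := by
      ext a b
      simp [MT]
    rw [QQ, QQ, h1, Matrix.charpoly_map, Polynomial.coeff_map]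
    simp only [_root_.map_mul, _root_.map_pow, _root_.map_neg, _root_.map_one]
    rfl
  have hrename : ∀ F : MvPolynomial (Fin n × Fin n) K,
      (MvPolynomial.sumAlgEquiv K (Fin n) (Fin n × Fin n)) ((MvPolynomial.rename Sum.inr) F)
        = MvPolynomial.C F := by
    intro F
    have := congrArg (fun φ => φ F)
      (MvPolynomial.sumAlgEquiv_comp_rename_inr K (Fin n) (Fin n × Fin n))
    simpa [MvPolynomial.algebraMap_eq] using this
  have h0 := Dd_Dd_QQ (K := K) (n := n) i j m
  rw [Dd_Dd_expand] at h0
  calc ∑ t : Fin n, ∑ p : Fin n,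
      (MvPolynomial.C (MvPolynomial.pderiv (j, t) (MvPolynomial.pderiv (i, p)
          (QQ (Matrix.of fun a b : Fin n => MvPolynomial.X (R := K) (a, b)) m)))
        * MvPolynomial.X t * MvPolynomial.X p :
        MvPolynomial (Fin n) (MvPolynomial (Fin n × Fin n) K))
      = (MvPolynomial.sumAlgEquiv K (Fin n) (Fin n × Fin n)) (∑ t : Fin n, ∑ p : Fin n,
          MvPolynomial.pderiv (Sum.inr (j, t)) (MvPolynomial.pderiv (Sum.inr (i, p))
            (QQ (MT K n) m))
            * MvPolynomial.X (Sum.inl t) * MvPolynomial.X (Sum.inl p)) := by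
        rw [map_sum]
        refine Finset.sum_congr rfl fun t _ => ?_
        rw [map_sum]
        refine Finset.sum_congr rfl fun p _ => ?_
        rw [_root_.map_mul, _root_.map_mul, hQ,
          MvPolynomial.pderiv_rename Sum.inr_injective,
          MvPolynomial.pderiv_rename Sum.inr_injective, hrename]
        simp
    _ = 0 := by rw [h0, map_zero]
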